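/- Let (R, m, k) be a commutative local ring with 2 a unit, m not isomorphic to R, and End_R(m) commutative and local. For every r ∈ 1 + m, the automorphism of R ⊕ m given by the diagonal matrix diag(r·1_R, r⁻¹·1_m) lies in the commutator subgroup of Aut_R(R ⊕ m). -/

import Mathlib

open IsLocalRing

section Aux
open scoped commutatorElement
variable {R : Type*} [CommRing R] {N : Type*} [AddCommGroup N] [Module R N]

/-- Elementary automorphism `(x, y) ↦ (x + f y, y)` of `R × N`. -/
def myE12 (f : N →ₗ[R] R) : (R × N) ≃ₗ[R] (R × N) where
  toFun p := (p.1 + f p.2, p.2)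
  invFun p := (p.1 - f p.2, p.2)
  map_add' p q := by ext <;> simp <;> ring
  map_smul' c p := by ext <;> simp [mul_add]
  left_inv p := by ext <;> simp
  right_inv p := by ext <;> simp

/-- Elementary automorphism `(x, y) ↦ (x, y + g x)` of `R × N`. -/
def myE21 (g : R →ₗ[R] N) : (R × N) ≃ₗ[R] (R × N) where
  toFun p := (p.1, p.2 + g p.1)
  invFun p := (p.1, p.2 - g p.1)
  map_add' p q := by ext <;> simp <;> abel
  map_smul' c p := by ext <;> simp only [Prod.smul_fst, Prod.smul_snd, smul_add, map_smul, RingHom.id_apply]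
  left_inv p := by ext <;> simp
  right_inv p := by ext <;> simp

/-- Diagonal automorphism `(x, y) ↦ (u x, y)` of `R × N`. -/
def myD (u : Rˣ) : (R × N) ≃ₗ[R] (R × N) where
  toFun p := ((u : R) * p.1, p.2)
  invFun p := ((↑u⁻¹ : R) * p.1, p.2)
  map_add' p q := by ext <;> simp [mul_add]
  map_smul' c p := by ext <;> simp <;> ring
  left_inv p := by ext <;> simp [← mul_assoc]
  right_inv p := by ext <;> simp [← mul_assoc]

@[simp] lemma myE12_apply (f : N →ₗ[R] R) (p : R × N) : myE12 f p = (p.1 + f p.2, p.2) := rfl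
@[simp] lemma myE21_apply (g : R →ₗ[R] N) (p : R × N) : myE21 g p = (p.1, p.2 + g p.1) := rfl
@[simp] lemma myD_apply (u : Rˣ) (p : R × N) : myD u p = ((u : R) * p.1, p.2) := rfl

lemma myMul_apply (a b : (R × N) ≃ₗ[R] (R × N)) (p : R × N) : (a * b) p = a (b p) := rfl

lemma myInv (a : (R × N) ≃ₗ[R] (R × N)) : a⁻¹ = a.symm := rfl

@[simp] lemma myE12_symm_apply (f : N →ₗ[R] R) (p : R × N) :
    (myE12 f).symm p = (p.1 - f p.2, p.2) := rfl
@[simp] lemma myE21_symm_apply (g : R →ₗ[R] N) (p : R × N) :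
    (myE21 g).symm p = (p.1, p.2 - g p.1) := rfl
@[simp] lemma myD_symm_apply (u : Rˣ) (p : R × N) :
    (myD u).symm p = ((↑u⁻¹ : R) * p.1, p.2) := rfl

lemma myE12_mem (h2 : IsUnit (2 : R)) (f : N →ₗ[R] R) :
    myE12 f ∈ commutator ((R × N) ≃ₗ[R] (R × N)) := by
  have key : myE12 f = ⁅(myD h2.unit : (R × N) ≃ₗ[R] (R × N)), myE12 f⁆ := by
    apply LinearEquiv.ext
    intro p
    simp only [commutatorElement_def, myMul_apply, myInv, myE12_apply, myE12_symm_apply,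
      myD_apply, myD_symm_apply, map_sub, h2.unit_spec]
    have hinv : (2 : R) * (↑h2.unit⁻¹ : R) = 1 := h2.mul_val_inv
    ext
    · show p.1 + f p.2 =
        2 * ((↑h2.unit⁻¹ : R) * (p.1 - f p.2) + f p.2)
      linear_combination (f p.2 - p.1) * hinv
    · rfl
  rw [commutator_def, key]
  exact Subgroup.commutator_mem_commutator (Subgroup.mem_top _) (Subgroup.mem_top _)

lemma myE21_mem (h2 : IsUnit (2 : R)) (g : R →ₗ[R] N) :
    myE21 g ∈ commutator ((R × N) ≃ₗ[R] (R × N)) := by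
  have key : myE21 g = ⁅(myD h2.unit : (R × N) ≃ₗ[R] (R × N)), myE21 ((-(2 : R)) • g)⁆ := by
    apply LinearEquiv.ext
    intro p
    simp only [commutatorElement_def, myMul_apply, myInv, myE21_apply, myE21_symm_apply,
      myD_apply, myD_symm_apply, LinearMap.smul_apply, map_smul, h2.unit_spec]
    have hinv : (2 : R) * (↑h2.unit⁻¹ : R) = 1 := h2.mul_val_inv
    ext
    · show p.1 = 2 * ((↑h2.unit⁻¹ : R) * p.1)
      linear_combination (-p.1) * hinv
    · show (p.2 + g p.1 : N) =
        p.2 - (-(2:R)) • g p.1 + (-(2:R)) • g ((↑h2.unit⁻¹ : R) * p.1)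
      rw [← smul_eq_mul, map_smul, smul_smul]
      match_scalars
      · ring
      · linear_combination hinv
  rw [commutator_def, key]
  exact Subgroup.commutator_mem_commutator (Subgroup.mem_top _) (Subgroup.mem_top _)
end Aux

/-- Let `(R, m, k)` be a commutative local ring with `2` a unit, `m ≇ R`, and
`End_R(m)` commutative and local. For every `r ∈ 1 + m` (a unit of `R`), the automorphism
`diag(r·1_R, r⁻¹·1_m)` of `R ⊕ m`, acting by `(x, y) ↦ (r x, r⁻¹ y)`, lies in the commutator
subgroup of `Aut_R(R ⊕ m)`. -/
theorem stmt_12 {R : Type*} [CommRing R] [IsLocalRing R]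
    (h2 : IsUnit (2 : R))
    (hm : IsEmpty ((maximalIdeal R) ≃ₗ[R] R))
    (hcomm : ∀ f g : Module.End R (maximalIdeal R), f * g = g * f)
    [IsLocalRing (Module.End R (maximalIdeal R))]
    (r : R) (hr : r - 1 ∈ maximalIdeal R) (hu : IsUnit r)
    (e : (R × maximalIdeal R) ≃ₗ[R] (R × maximalIdeal R))
    (he : ∀ p : R × maximalIdeal R,
      (e p).1 = r * p.1 ∧ ((e p).2 : R) = (↑hu.unit⁻¹ : R) * (p.2 : R)) :
    e ∈ commutator ((R × maximalIdeal R) ≃ₗ[R] (R × maximalIdeal R)) := by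

  have hv : (↑hu.unit⁻¹ : R) * r = 1 := hu.val_inv_mul
  have hc1 : (↑hu.unit⁻¹ : R) - 1 ∈ maximalIdeal R := by
    have h : (↑hu.unit⁻¹ : R) - 1 = (↑hu.unit⁻¹ : R) * (1 - r) := by linear_combination hv
    rw [h]
    exact Ideal.mul_mem_left _ _ (by simpa using (maximalIdeal R).neg_mem hr)
  set ι : (maximalIdeal R) →ₗ[R] R := (maximalIdeal R).subtype with hι
  set f2 : (maximalIdeal R) →ₗ[R] R := -((↑hu.unit⁻¹ : R) • ι) with hf2
  set g1 : R →ₗ[R] (maximalIdeal R) :=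
    LinearMap.toSpanSingleton R _ ⟨(↑hu.unit⁻¹ : R) - 1, hc1⟩ with hg1
  set g2 : R →ₗ[R] (maximalIdeal R) :=
    LinearMap.toSpanSingleton R _ ⟨r - 1, hr⟩ with hg2
  have hfact : e = myE21 g1 * myE12 ι * myE21 g2 * myE12 f2 := by
    apply LinearEquiv.ext
    intro p
    obtain ⟨h1, h1'⟩ := he p
    simp only [myMul_apply, myE12_apply, myE21_apply]
    have hfst : ∀ q : R × maximalIdeal R, q.1 = (e p).1 → ((q.2 : R) = ((e p).2 : R)) →
        e p = q := by
      rintro ⟨a, b⟩ ha hb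
      exact Prod.ext ha.symm (Subtype.ext hb.symm)
    refine hfst _ ?_ ?_
    · simp only [hf2, hg1, hg2, hι, LinearMap.neg_apply, LinearMap.smul_apply,
        Submodule.coe_subtype, LinearMap.toSpanSingleton_apply, smul_eq_mul,
        Submodule.coe_smul, AddSubmonoid.coe_add, Submodule.coe_toAddSubmonoid, h1]
      push_cast
      simp only [smul_eq_mul]
      linear_combination (-(p.2 : R)) * hv
    · simp only [hf2, hg1, hg2, hι, LinearMap.neg_apply, LinearMap.smul_apply,
        Submodule.coe_subtype, LinearMap.toSpanSingleton_apply, smul_eq_mul,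
        Submodule.coe_smul, AddSubmonoid.coe_add, Submodule.coe_toAddSubmonoid, h1']
      push_cast
      simp only [smul_eq_mul]
      linear_combination (p.1 - (↑hu.unit⁻¹ : R) * (p.2 : R)) * hv
  rw [hfact]
  have hC := commutator ((R × maximalIdeal R) ≃ₗ[R] (R × maximalIdeal R))
  exact Subgroup.mul_mem _ (Subgroup.mul_mem _ (Subgroup.mul_mem _
    (myE21_mem h2 g1) (myE12_mem h2 ι)) (myE21_mem h2 g2)) (myE12_mem h2 f2)
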